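/- First-order necessary condition (Wiener–Hopf integral equation of the second kind): if ξ̂ is admissible and minimizes the execution-cost functional C over all admissible strategies, then there exists a constant c₀ such that (γ/(2η)) ∫₀ᵀ ξ̂(s) e^{−ρ|t−s|} ds + ξ̂(t) = c₀ for Lebesgue-almost every t ∈ [0,T]. -/

import Mathlib

open MeasureTheory Set

lemma wh_quad_zero {L Q : ℝ} (h : ∀ ε : ℝ, 0 ≤ ε * L + ε ^ 2 * Q) : L = 0 := by
  by_contra hL
  have hq : Q ≤ |Q| := le_abs_self Q
  have hq0 : (0:ℝ) < |Q| + 1 := by positivity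
  have h1 := h (-L / (|Q| + 1))
  have hL2 : 0 < L ^ 2 := by positivity
  rw [div_pow, neg_pow, div_mul_eq_mul_div, div_mul_eq_mul_div, div_add_div _ _ (ne_of_gt hq0) (by positivity)] at h1
  rw [le_div_iff₀ (by positivity)] at h1
  nlinarith [sq_nonneg (|Q| + 1), mul_pos hL2 hq0]

lemma wh_l2_mul_integrable {μ : Measure ℝ} {f g : ℝ → ℝ} (hf : MemLp f 2 μ) (hg : MemLp g 2 μ) :
    Integrable (fun t => f t * g t) μ := by
  refine Integrable.mono' (hf.integrable_sq.add hg.integrable_sq)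
    (hf.aestronglyMeasurable.mul hg.aestronglyMeasurable) (Filter.Eventually.of_forall fun t => ?_)
  simp only [Real.norm_eq_abs, abs_mul, Pi.add_apply]
  nlinarith [sq_nonneg (|f t| - |g t|), sq_abs (f t), sq_abs (g t), abs_nonneg (f t), abs_nonneg (g t)]

lemma wh_mul_bdd_integrableOn {f k : ℝ → ℝ} {S : Set ℝ} (hS : MeasurableSet S)
    (hf : IntegrableOn f S volume) (hk : AEStronglyMeasurable k (volume.restrict S))
    {c : ℝ} (hbd : ∀ s ∈ S, |k s| ≤ c) :
    IntegrableOn (fun s => f s * k s) S volume := by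
  have h := Integrable.bdd_mul (c := c) hf hk
    ((ae_restrict_iff' hS).2 (Filter.Eventually.of_forall fun s hs => by
      simpa using hbd s hs))
  exact h.congr (Filter.Eventually.of_forall fun s => mul_comm _ _)

noncomputable def wP (T ρ : ℝ) (f : ℝ → ℝ) : ℝ → ℝ := fun t =>
  Real.exp (-ρ * t) * ∫ s in (0:ℝ)..t, (Ioc (0:ℝ) T).indicator (fun s => f s * Real.exp (ρ * s)) s

noncomputable def wQ (T ρ : ℝ) (f : ℝ → ℝ) : ℝ → ℝ := fun t =>
  Real.exp (ρ * t) * ∫ s in t..T, (Ioc (0:ℝ) T).indicator (fun s => f s * Real.exp (-ρ * s)) s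

lemma wh_ind_integrable (T ρ : ℝ) (f : ℝ → ℝ)
    (hf : IntegrableOn f (Ioc 0 T) volume) :
    ∀ c : ℝ, Integrable ((Ioc (0:ℝ) T).indicator fun s => f s * Real.exp (c * s)) volume := by
  intro c
  rw [integrable_indicator_iff measurableSet_Ioc]
  refine Integrable.bdd_mul (c := Real.exp (|c| * T)) hf
    (Continuous.aestronglyMeasurable (by continuity))
    ((ae_restrict_iff' measurableSet_Ioc).2 (Filter.Eventually.of_forall fun s hs => ?_))
    |>.congr (Filter.Eventually.of_forall fun s => mul_comm _ _)
  simp only [Real.norm_eq_abs, Real.abs_exp]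
  refine Real.exp_le_exp.2 ?_
  calc c * s ≤ |c| * s := mul_le_mul_of_nonneg_right (le_abs_self c) hs.1.le
    _ ≤ |c| * T := mul_le_mul_of_nonneg_left hs.2 (abs_nonneg c)

lemma wP_continuous (T ρ : ℝ) (f : ℝ → ℝ)
    (hf : IntegrableOn f (Ioc 0 T) volume) : Continuous (wP T ρ f) :=
  Continuous.mul (by continuity)
    ((wh_ind_integrable T ρ f hf ρ).continuous_primitive 0)

lemma wQ_continuous (T ρ : ℝ) (f : ℝ → ℝ)
    (hf : IntegrableOn f (Ioc 0 T) volume) : Continuous (wQ T ρ f) := by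
  have h := wh_ind_integrable T ρ f hf (-ρ)
  have hc : Continuous fun t : ℝ =>
      Real.exp (ρ * t) * ((∫ s in (0:ℝ)..T, (Ioc (0:ℝ) T).indicator (fun s => f s * Real.exp (-ρ * s)) s)
        - ∫ s in (0:ℝ)..t, (Ioc (0:ℝ) T).indicator (fun s => f s * Real.exp (-ρ * s)) s) :=
    Continuous.mul (by continuity) (continuous_const.sub (h.continuous_primitive 0))
  refine hc.congr fun t => ?_
  rw [intervalIntegral.integral_interval_sub_left h.intervalIntegrable h.intervalIntegrable]
  rfl

lemma wh_abs_integral_le {μ : Measure ℝ} (f : ℝ → ℝ) :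
    |∫ s, f s ∂μ| ≤ ∫ s, |f s| ∂μ := by
  simpa [Real.norm_eq_abs] using norm_integral_le_integral_norm (μ := μ) f

lemma wA_eq (T ρ : ℝ) (f : ℝ → ℝ) {t : ℝ} (ht : t ∈ Icc 0 T) :
    (∫ s in (0:ℝ)..t, f s * Real.exp (-ρ * (t - s))) = wP T ρ f t := by
  have step1 : (∫ s in (0:ℝ)..t, f s * Real.exp (-ρ * (t - s)))
      = ∫ s in (0:ℝ)..t, Real.exp (-ρ * t) * (f s * Real.exp (ρ * s)) :=
    intervalIntegral.integral_congr fun s _ => by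
      rw [show -ρ * (t - s) = -ρ * t + ρ * s by ring, Real.exp_add]; ring
  rw [step1, intervalIntegral.integral_const_mul, wP]
  congr 1
  rw [intervalIntegral.integral_of_le ht.1, intervalIntegral.integral_of_le ht.1,
    setIntegral_indicator measurableSet_Ioc,
    inter_eq_left.2 (Ioc_subset_Ioc_right ht.2)]

lemma wR_eq (T ρ : ℝ) (f : ℝ → ℝ) {t : ℝ} (ht : t ∈ Icc 0 T) :
    (∫ s in t..T, f s * Real.exp (-ρ * (s - t))) = wQ T ρ f t := by
  have step1 : (∫ s in t..T, f s * Real.exp (-ρ * (s - t)))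
      = ∫ s in t..T, Real.exp (ρ * t) * (f s * Real.exp (-ρ * s)) :=
    intervalIntegral.integral_congr fun s _ => by
      rw [show -ρ * (s - t) = ρ * t + -ρ * s by ring, Real.exp_add]; ring
  rw [step1, intervalIntegral.integral_const_mul, wQ]
  congr 1
  rw [intervalIntegral.integral_of_le ht.2, intervalIntegral.integral_of_le ht.2,
    setIntegral_indicator measurableSet_Ioc,
    inter_eq_left.2 (Ioc_subset_Ioc_left ht.1)]

lemma wP_bound (T ρ : ℝ) (f : ℝ → ℝ) (hρ : 0 ≤ ρ)
    (hf : IntegrableOn f (Ioc 0 T) volume) {t : ℝ} (ht : t ∈ Icc 0 T) :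
    |wP T ρ f t| ≤ ∫ s in Ioc (0:ℝ) T, |f s| := by
  rw [← wA_eq T ρ f ht, intervalIntegral.integral_of_le ht.1]
  have hsub : Ioc 0 t ⊆ Ioc 0 T := Ioc_subset_Ioc_right ht.2
  have hint : IntegrableOn (fun s => f s * Real.exp (-ρ * (t - s))) (Ioc 0 t) volume :=
    wh_mul_bdd_integrableOn measurableSet_Ioc (hf.mono_set hsub)
      (Continuous.aestronglyMeasurable (by continuity)) (c := 1)
      (fun s hs => by
        rw [Real.abs_exp, Real.exp_le_one_iff]
        nlinarith [hs.2, abs_nonneg (t - s)])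
  calc |∫ s in Ioc (0:ℝ) t, f s * Real.exp (-ρ * (t - s))|
      ≤ ∫ s in Ioc (0:ℝ) t, |f s * Real.exp (-ρ * (t - s))| := wh_abs_integral_le _
    _ ≤ ∫ s in Ioc (0:ℝ) t, |f s| := by
        refine setIntegral_mono_on hint.abs ((hf.mono_set hsub).abs) measurableSet_Ioc
          fun s hs => ?_
        rw [abs_mul, Real.abs_exp]
        nlinarith [abs_nonneg (f s), Real.exp_le_one_iff.2 (by nlinarith [hs.2] : -ρ * (t - s) ≤ 0),
          Real.exp_pos (-ρ * (t - s))]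
    _ ≤ ∫ s in Ioc (0:ℝ) T, |f s| := by
        refine setIntegral_mono_set hf.abs
          (Filter.Eventually.of_forall fun s => abs_nonneg _) hsub.eventuallyLE

lemma wQ_bound (T ρ : ℝ) (f : ℝ → ℝ) (hρ : 0 ≤ ρ)
    (hf : IntegrableOn f (Ioc 0 T) volume) {t : ℝ} (ht : t ∈ Icc 0 T) :
    |wQ T ρ f t| ≤ ∫ s in Ioc (0:ℝ) T, |f s| := by
  rw [← wR_eq T ρ f ht, intervalIntegral.integral_of_le ht.2]
  have hsub : Ioc t T ⊆ Ioc 0 T := Ioc_subset_Ioc_left ht.1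
  have hint : IntegrableOn (fun s => f s * Real.exp (-ρ * (s - t))) (Ioc t T) volume :=
    wh_mul_bdd_integrableOn measurableSet_Ioc (hf.mono_set hsub)
      (Continuous.aestronglyMeasurable (by continuity)) (c := 1)
      (fun s hs => by
        rw [Real.abs_exp, Real.exp_le_one_iff]
        nlinarith [hs.1])
  calc |∫ s in Ioc t T, f s * Real.exp (-ρ * (s - t))|
      ≤ ∫ s in Ioc t T, |f s * Real.exp (-ρ * (s - t))| := wh_abs_integral_le _
    _ ≤ ∫ s in Ioc t T, |f s| := by
        refine setIntegral_mono_on hint.abs ((hf.mono_set hsub).abs) measurableSet_Ioc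
          fun s hs => ?_
        rw [abs_mul, Real.abs_exp]
        nlinarith [abs_nonneg (f s), Real.exp_le_one_iff.2 (by nlinarith [hs.1] : -ρ * (s - t) ≤ 0),
          Real.exp_pos (-ρ * (s - t))]
    _ ≤ ∫ s in Ioc (0:ℝ) T, |f s| := by
        refine setIntegral_mono_set hf.abs
          (Filter.Eventually.of_forall fun s => abs_nonneg _) hsub.eventuallyLE

lemma wK_eq (T ρ : ℝ) (f : ℝ → ℝ) (hρ : 0 ≤ ρ)
    (hf : IntegrableOn f (Ioc 0 T) volume) {t : ℝ} (ht : t ∈ Icc 0 T) :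
    (∫ s in (0:ℝ)..T, f s * Real.exp (-ρ * |t - s|)) = wP T ρ f t + wQ T ρ f t := by
  have key : ∀ a b : ℝ, a ≤ b → Ioc a b ⊆ Ioc 0 T →
      IntervalIntegrable (fun s => f s * Real.exp (-ρ * |t - s|)) volume a b := by
    intro a b hab hsub
    refine (intervalIntegrable_iff_integrableOn_Ioc_of_le hab).2 ?_
    refine wh_mul_bdd_integrableOn measurableSet_Ioc (hf.mono_set hsub)
      (Continuous.aestronglyMeasurable (by continuity)) (c := 1) fun s _ => ?_
    rw [Real.abs_exp, Real.exp_le_one_iff]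
    nlinarith [abs_nonneg (t - s)]
  rw [← intervalIntegral.integral_add_adjacent_intervals
    (key 0 t ht.1 (Ioc_subset_Ioc_right ht.2)) (key t T ht.2 (Ioc_subset_Ioc_left ht.1))]
  congr 1
  · rw [← wA_eq T ρ f ht]
    refine intervalIntegral.integral_congr fun s hs => ?_
    rw [uIcc_of_le ht.1] at hs
    rw [abs_of_nonneg (sub_nonneg.2 hs.2)]
  · rw [← wR_eq T ρ f ht]
    refine intervalIntegral.integral_congr fun s hs => ?_
    rw [uIcc_of_le ht.2] at hs
    rw [abs_of_nonpos (sub_nonpos.2 hs.1), neg_sub]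

lemma wh_fubini (T ρ : ℝ) (hρ : 0 ≤ ρ) (f ζ : ℝ → ℝ)
    (hf : IntegrableOn f (Ioc 0 T) volume) (hz : IntegrableOn ζ (Ioc 0 T) volume) :
    (∫ t in Ioc (0:ℝ) T, f t * ∫ s in (0:ℝ)..t, ζ s * Real.exp (-ρ * (t - s)))
      = ∫ s in Ioc (0:ℝ) T, ζ s * ∫ u in s..T, f u * Real.exp (-ρ * (u - s)) := by
  set ν := volume.restrict (Ioc (0:ℝ) T) with hν
  set k2 : ℝ × ℝ → ℝ :=
    ({q : ℝ × ℝ | q.2 ≤ q.1}).indicator (fun q => Real.exp (-ρ * (q.1 - q.2))) with hk2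
  set H : ℝ → ℝ → ℝ := fun t s => f t * ζ s * k2 (t, s) with hH
  have hk2m : StronglyMeasurable k2 :=
    (Continuous.stronglyMeasurable (by continuity)).indicator
      (measurableSet_le measurable_snd measurable_fst)
  have hk2b : ∀ p : ℝ × ℝ, ‖k2 p‖ ≤ 1 := by
    intro p
    rw [hk2]
    by_cases hp : p ∈ {q : ℝ × ℝ | q.2 ≤ q.1}
    · rw [indicator_of_mem hp, Real.norm_eq_abs, Real.abs_exp, Real.exp_le_one_iff]
      have : p.2 ≤ p.1 := hp
      nlinarith
    · rw [indicator_of_notMem hp]; simp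
  have hHint : Integrable (Function.uncurry H) (ν.prod ν) := by
    have h0 : Integrable (fun p : ℝ × ℝ => f p.1 * ζ p.2) (ν.prod ν) :=
      Integrable.mul_prod hf hz
    have h1 := h0.bdd_mul (c := 1) hk2m.aestronglyMeasurable
      (Filter.Eventually.of_forall hk2b)
    exact h1.congr (Filter.Eventually.of_forall fun p => by
      simp only [Function.uncurry, hH]; ring)
  have hL : (∫ t in Ioc (0:ℝ) T, f t * ∫ s in (0:ℝ)..t, ζ s * Real.exp (-ρ * (t - s)))
      = ∫ t, (∫ s, H t s ∂ν) ∂ν := by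
    refine setIntegral_congr_fun measurableSet_Ioc fun t ht => ?_
    have hfun : ∀ s, H t s
        = f t * ((Iic t).indicator (fun s => ζ s * Real.exp (-ρ * (t - s))) s) := by
      intro s
      by_cases hs : s ≤ t
      · rw [hH, hk2]
        simp only [indicator_of_mem (by exact hs : (t, s) ∈ {q : ℝ × ℝ | q.2 ≤ q.1}),
          indicator_of_mem (mem_Iic.2 hs)]
        ring
      · rw [hH, hk2]
        simp only [indicator_of_notMem (by exact hs : (t, s) ∉ {q : ℝ × ℝ | q.2 ≤ q.1}),
          indicator_of_notMem (fun h => hs (mem_Iic.1 h))]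
        ring
    rw [show (fun s => H t s) = fun s =>
        f t * ((Iic t).indicator (fun s => ζ s * Real.exp (-ρ * (t - s))) s) from funext hfun]
    rw [integral_const_mul, hν, setIntegral_indicator measurableSet_Iic]
    have hset : Ioc (0:ℝ) T ∩ Iic t = Ioc 0 t := by
      ext u; simp only [mem_inter_iff, mem_Ioc, mem_Iic]
      exact ⟨fun h => ⟨h.1.1, h.2⟩, fun h => ⟨⟨h.1, h.2.trans ht.2⟩, h.2⟩⟩
    rw [hset, intervalIntegral.integral_of_le ht.1.le]
  have hR : (∫ s, (∫ t, H t s ∂ν) ∂ν)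
      = ∫ s in Ioc (0:ℝ) T, ζ s * ∫ u in s..T, f u * Real.exp (-ρ * (u - s)) := by
    refine setIntegral_congr_fun measurableSet_Ioc fun s hs => ?_
    have hfun : ∀ t, H t s
        = ζ s * ((Ici s).indicator (fun u => f u * Real.exp (-ρ * (u - s))) t) := by
      intro t
      by_cases hst : s ≤ t
      · rw [hH, hk2]
        simp only [indicator_of_mem (by exact hst : (t, s) ∈ {q : ℝ × ℝ | q.2 ≤ q.1}),
          indicator_of_mem (mem_Ici.2 hst)]
        ring
      · rw [hH, hk2]
        simp only [indicator_of_notMem (by exact hst : (t, s) ∉ {q : ℝ × ℝ | q.2 ≤ q.1}),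
          indicator_of_notMem (fun h => hst (mem_Ici.1 h))]
        ring
    rw [show (fun t => H t s) = fun t =>
        ζ s * ((Ici s).indicator (fun u => f u * Real.exp (-ρ * (u - s))) t) from funext hfun]
    rw [integral_const_mul, hν, setIntegral_indicator measurableSet_Ici]
    have hset : Ioc (0:ℝ) T ∩ Ici s = Icc s T := by
      ext u; simp only [mem_inter_iff, mem_Ioc, mem_Icc, mem_Ici]
      exact ⟨fun h => ⟨h.2, h.1.2⟩, fun h => ⟨⟨lt_of_lt_of_le hs.1 h.1, h.2⟩, h.1⟩⟩
    rw [hset, integral_Icc_eq_integral_Ioc, intervalIntegral.integral_of_le hs.2]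
  rw [hL, MeasureTheory.integral_integral_swap hHint, hR]

noncomputable def wA (ρ : ℝ) (f : ℝ → ℝ) : ℝ → ℝ := fun t =>
  ∫ s in (0:ℝ)..t, f s * Real.exp (-ρ * (t - s))

noncomputable def wR (T ρ : ℝ) (f : ℝ → ℝ) : ℝ → ℝ := fun t =>
  ∫ u in t..T, f u * Real.exp (-ρ * (u - t))

lemma wh_first_order (T η γ ρ : ℝ) (hT : 0 < T) (hη : 0 < η) (hγ : 0 < γ) (hρ : 0 < ρ)
    (f ζ : ℝ → ℝ)
    (hf2 : MemLp f 2 (volume.restrict (Icc 0 T)))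
    (hz2 : MemLp ζ 2 (volume.restrict (Icc 0 T)))
    (hmin : ∀ ε : ℝ,
      (∫ t in (0:ℝ)..T, (η * f t ^ 2 + γ * f t * wA ρ f t)) ≤
      ∫ t in (0:ℝ)..T, (η * (f t + ε * ζ t) ^ 2 +
        γ * (f t + ε * ζ t) * wA ρ (fun s => f s + ε * ζ s) t)) :
    ∫ t in Ioc (0:ℝ) T, ζ t *
      (2 * η * f t + γ * ∫ s in (0:ℝ)..T, f s * Real.exp (-ρ * |t - s|)) = 0 := by
  have hfIcc : IntegrableOn f (Icc 0 T) volume := hf2.integrable one_le_two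
  have hzIcc : IntegrableOn ζ (Icc 0 T) volume := hz2.integrable one_le_two
  have hfI : IntegrableOn f (Ioc 0 T) volume := hfIcc.mono_set Ioc_subset_Icc_self
  have hzI : IntegrableOn ζ (Ioc 0 T) volume := hzIcc.mono_set Ioc_subset_Icc_self
  -- measurability of the convolution-type functions on `Ioc 0 T`
  have hAf_meas : AEStronglyMeasurable (wA ρ f) (volume.restrict (Ioc 0 T)) :=
    ((wP_continuous T ρ f hfI).aestronglyMeasurable).congr
      ((ae_restrict_iff' measurableSet_Ioc).2 (Filter.Eventually.of_forall fun t ht =>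
        (wA_eq T ρ f (Ioc_subset_Icc_self ht)).symm))
  have hBz_meas : AEStronglyMeasurable (wA ρ ζ) (volume.restrict (Ioc 0 T)) :=
    ((wP_continuous T ρ ζ hzI).aestronglyMeasurable).congr
      ((ae_restrict_iff' measurableSet_Ioc).2 (Filter.Eventually.of_forall fun t ht =>
        (wA_eq T ρ ζ (Ioc_subset_Icc_self ht)).symm))
  have hRf_meas : AEStronglyMeasurable (wR T ρ f) (volume.restrict (Ioc 0 T)) :=
    ((wQ_continuous T ρ f hfI).aestronglyMeasurable).congr
      ((ae_restrict_iff' measurableSet_Ioc).2 (Filter.Eventually.of_forall fun t ht =>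
        (wR_eq T ρ f (Ioc_subset_Icc_self ht)).symm))
  -- bounds
  have hAf_bd : ∀ t ∈ Ioc (0:ℝ) T, |wA ρ f t| ≤ ∫ s in Ioc (0:ℝ) T, |f s| := fun t ht => by
    rw [show wA ρ f t = wP T ρ f t from wA_eq T ρ f (Ioc_subset_Icc_self ht)]
    exact wP_bound T ρ f hρ.le hfI (Ioc_subset_Icc_self ht)
  have hBz_bd : ∀ t ∈ Ioc (0:ℝ) T, |wA ρ ζ t| ≤ ∫ s in Ioc (0:ℝ) T, |ζ s| := fun t ht => by
    rw [show wA ρ ζ t = wP T ρ ζ t from wA_eq T ρ ζ (Ioc_subset_Icc_self ht)]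
    exact wP_bound T ρ ζ hρ.le hzI (Ioc_subset_Icc_self ht)
  have hRf_bd : ∀ t ∈ Ioc (0:ℝ) T, |wR T ρ f t| ≤ ∫ s in Ioc (0:ℝ) T, |f s| := fun t ht => by
    rw [show wR T ρ f t = wQ T ρ f t from wR_eq T ρ f (Ioc_subset_Icc_self ht)]
    exact wQ_bound T ρ f hρ.le hfI (Ioc_subset_Icc_self ht)
  -- integrabilities
  have hff' : IntegrableOn (fun t => f t ^ 2) (Icc 0 T) volume := hf2.integrable_sq
  have hzz' : IntegrableOn (fun t => ζ t ^ 2) (Icc 0 T) volume := hz2.integrable_sq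
  have hfz' : IntegrableOn (fun t => f t * ζ t) (Icc 0 T) volume := wh_l2_mul_integrable hf2 hz2
  have hff : IntegrableOn (fun t => f t ^ 2) (Ioc 0 T) volume := hff'.mono_set Ioc_subset_Icc_self
  have hzz : IntegrableOn (fun t => ζ t ^ 2) (Ioc 0 T) volume := hzz'.mono_set Ioc_subset_Icc_self
  have hfz : IntegrableOn (fun t => f t * ζ t) (Ioc 0 T) volume := hfz'.mono_set Ioc_subset_Icc_self
  have hfA : IntegrableOn (fun t => f t * wA ρ f t) (Ioc 0 T) volume :=
    wh_mul_bdd_integrableOn measurableSet_Ioc hfI hAf_meas hAf_bd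
  have hzA : IntegrableOn (fun t => ζ t * wA ρ f t) (Ioc 0 T) volume :=
    wh_mul_bdd_integrableOn measurableSet_Ioc hzI hAf_meas hAf_bd
  have hfB : IntegrableOn (fun t => f t * wA ρ ζ t) (Ioc 0 T) volume :=
    wh_mul_bdd_integrableOn measurableSet_Ioc hfI hBz_meas hBz_bd
  have hzB : IntegrableOn (fun t => ζ t * wA ρ ζ t) (Ioc 0 T) volume :=
    wh_mul_bdd_integrableOn measurableSet_Ioc hzI hBz_meas hBz_bd
  have hzR : IntegrableOn (fun t => ζ t * wR T ρ f t) (Ioc 0 T) volume :=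
    wh_mul_bdd_integrableOn measurableSet_Ioc hzI hRf_meas hRf_bd
  -- the three coefficient integrands
  have hIa : IntegrableOn (fun t => η * f t ^ 2 + γ * (f t * wA ρ f t)) (Ioc 0 T) volume :=
    (hff.const_mul η).add (hfA.const_mul γ)
  have hIb : IntegrableOn (fun t =>
      2 * η * (f t * ζ t) + γ * (ζ t * wA ρ f t) + γ * (f t * wA ρ ζ t)) (Ioc 0 T) volume :=
    ((hfz.const_mul (2 * η)).add (hzA.const_mul γ)).add (hfB.const_mul γ)
  have hIc : IntegrableOn (fun t => η * ζ t ^ 2 + γ * (ζ t * wA ρ ζ t)) (Ioc 0 T) volume :=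
    (hzz.const_mul η).add (hzB.const_mul γ)
  -- linearity of the inner integral
  have hinner : ∀ ε : ℝ, ∀ t ∈ Ioc (0:ℝ) T,
      wA ρ (fun s => f s + ε * ζ s) t = wA ρ f t + ε * wA ρ ζ t := by
    intro ε t ht
    have hker : ∀ g : ℝ → ℝ, IntegrableOn g (Ioc 0 T) volume →
        IntervalIntegrable (fun s => g s * Real.exp (-ρ * (t - s))) volume 0 t := by
      intro g hg
      refine (intervalIntegrable_iff_integrableOn_Ioc_of_le ht.1.le).2 ?_
      refine wh_mul_bdd_integrableOn measurableSet_Ioc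
        (hg.mono_set (Ioc_subset_Ioc_right ht.2))
        (Continuous.aestronglyMeasurable (by continuity)) (c := 1) fun s hs => ?_
      rw [Real.abs_exp, Real.exp_le_one_iff]
      nlinarith [hs.2]
    have h1 := hker f hfI
    have h2 := hker ζ hzI
    show (∫ s in (0:ℝ)..t, (f s + ε * ζ s) * Real.exp (-ρ * (t - s))) = _
    rw [show (fun s => (f s + ε * ζ s) * Real.exp (-ρ * (t - s)))
        = fun s => f s * Real.exp (-ρ * (t - s)) + ε * (ζ s * Real.exp (-ρ * (t - s)))
        from funext fun s => by ring]
    rw [intervalIntegral.integral_add h1 (h2.const_mul ε), intervalIntegral.integral_const_mul]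
    rfl
  -- expansion of the cost
  have hexp : ∀ ε : ℝ,
      (∫ t in (0:ℝ)..T, (η * (f t + ε * ζ t) ^ 2 +
        γ * (f t + ε * ζ t) * wA ρ (fun s => f s + ε * ζ s) t))
      = (∫ t in Ioc (0:ℝ) T, (η * f t ^ 2 + γ * (f t * wA ρ f t)))
        + (ε * ∫ t in Ioc (0:ℝ) T,
            (2 * η * (f t * ζ t) + γ * (ζ t * wA ρ f t) + γ * (f t * wA ρ ζ t)))
        + ε ^ 2 * ∫ t in Ioc (0:ℝ) T, (η * ζ t ^ 2 + γ * (ζ t * wA ρ ζ t)) := by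
    intro ε
    rw [intervalIntegral.integral_of_le hT.le]
    rw [setIntegral_congr_fun measurableSet_Ioc (show EqOn
      (fun t => η * (f t + ε * ζ t) ^ 2 +
        γ * (f t + ε * ζ t) * wA ρ (fun s => f s + ε * ζ s) t)
      (fun t => (η * f t ^ 2 + γ * (f t * wA ρ f t))
        + (ε * (2 * η * (f t * ζ t) + γ * (ζ t * wA ρ f t) + γ * (f t * wA ρ ζ t))
          + ε ^ 2 * (η * ζ t ^ 2 + γ * (ζ t * wA ρ ζ t)))) (Ioc 0 T)
      from fun t ht => by simp only [hinner ε t ht]; ring)]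
    have hIb' : IntegrableOn (fun t =>
        ε * (2 * η * (f t * ζ t) + γ * (ζ t * wA ρ f t) + γ * (f t * wA ρ ζ t))) (Ioc 0 T) volume :=
      hIb.const_mul ε
    have hIc' : IntegrableOn (fun t =>
        ε ^ 2 * (η * ζ t ^ 2 + γ * (ζ t * wA ρ ζ t))) (Ioc 0 T) volume :=
      hIc.const_mul (ε ^ 2)
    have hIbc : IntegrableOn (fun t =>
        ε * (2 * η * (f t * ζ t) + γ * (ζ t * wA ρ f t) + γ * (f t * wA ρ ζ t))
          + ε ^ 2 * (η * ζ t ^ 2 + γ * (ζ t * wA ρ ζ t))) (Ioc 0 T) volume := hIb'.add hIc'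
    rw [integral_add hIa hIbc, integral_add hIb' hIc',
      integral_const_mul, integral_const_mul]
    ring
  have hbase : (∫ t in (0:ℝ)..T, (η * f t ^ 2 + γ * f t * wA ρ f t))
      = ∫ t in Ioc (0:ℝ) T, (η * f t ^ 2 + γ * (f t * wA ρ f t)) := by
    rw [intervalIntegral.integral_of_le hT.le]
    exact setIntegral_congr_fun measurableSet_Ioc fun t _ => by ring
  -- deduce the linear coefficient vanishes
  have hL0 : (∫ t in Ioc (0:ℝ) T,
      (2 * η * (f t * ζ t) + γ * (ζ t * wA ρ f t) + γ * (f t * wA ρ ζ t))) = 0 := by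
    refine wh_quad_zero (Q := ∫ t in Ioc (0:ℝ) T, (η * ζ t ^ 2 + γ * (ζ t * wA ρ ζ t)))
      fun ε => ?_
    have h := hmin ε
    rw [hbase, hexp ε] at h
    linarith
  -- identify the target integral with the linear coefficient, via Fubini
  have hsplit : (∫ t in Ioc (0:ℝ) T, ζ t *
      (2 * η * f t + γ * ∫ s in (0:ℝ)..T, f s * Real.exp (-ρ * |t - s|)))
      = ∫ t in Ioc (0:ℝ) T,
        (2 * η * (f t * ζ t) + γ * (ζ t * wA ρ f t) + γ * (ζ t * wR T ρ f t)) := by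
    refine setIntegral_congr_fun measurableSet_Ioc fun t ht => ?_
    rw [wK_eq T ρ f hρ.le hfI (Ioc_subset_Icc_self ht),
      ← wA_eq T ρ f (Ioc_subset_Icc_self ht), ← wR_eq T ρ f (Ioc_subset_Icc_self ht)]
    show ζ t * (2 * η * f t + γ * (wA ρ f t + wR T ρ f t)) = _
    ring
  have hfub : (∫ t in Ioc (0:ℝ) T, ζ t * wR T ρ f t)
      = ∫ t in Ioc (0:ℝ) T, f t * wA ρ ζ t :=
    (wh_fubini T ρ hρ.le f ζ hfI hzI).symm
  have h1 : IntegrableOn (fun t => 2 * η * (f t * ζ t)) (Ioc 0 T) volume :=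
    hfz.const_mul (2 * η)
  have h2 : IntegrableOn (fun t => γ * (ζ t * wA ρ f t)) (Ioc 0 T) volume := hzA.const_mul γ
  have h12 : IntegrableOn (fun t => 2 * η * (f t * ζ t) + γ * (ζ t * wA ρ f t))
      (Ioc 0 T) volume := h1.add h2
  have h3 : IntegrableOn (fun t => γ * (ζ t * wR T ρ f t)) (Ioc 0 T) volume := hzR.const_mul γ
  have h4 : IntegrableOn (fun t => γ * (f t * wA ρ ζ t)) (Ioc 0 T) volume := hfB.const_mul γ
  rw [integral_add h12 h4, integral_const_mul] at hL0
  rw [hsplit, integral_add h12 h3, integral_const_mul, hfub]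
  linarith

/-- First-order necessary condition (Wiener–Hopf integral equation of the second kind):
if `ξ̂` is admissible and minimizes the execution cost `C` over admissible strategies,
then there is a constant `c₀` with
`(γ/(2η)) ∫₀ᵀ ξ̂(s) e^{-ρ|t-s|} ds + ξ̂(t) = c₀` for a.e. `t ∈ [0,T]`. -/
theorem stmt_12 (T x η γ ρ : ℝ) (hT : 0 < T) (hx : 0 < x) (hη : 0 < η) (hγ : 0 < γ)
    (hρ : 0 < ρ)
    (C : (ℝ → ℝ) → ℝ)
    (hC : ∀ ξ : ℝ → ℝ, C ξ = ∫ t in (0:ℝ)..T,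
      (η * (ξ t) ^ 2 + γ * ξ t * ∫ s in (0:ℝ)..t, ξ s * Real.exp (-ρ * (t - s))))
    (ξhat : ℝ → ℝ)
    (hmem : MemLp ξhat 2 (volume.restrict (Icc 0 T)))
    (hadm : (∫ t in (0:ℝ)..T, ξhat t) = x)
    (hmin : ∀ ξ : ℝ → ℝ, MemLp ξ 2 (volume.restrict (Icc 0 T)) →
      (∫ t in (0:ℝ)..T, ξ t) = x → C ξhat ≤ C ξ) :
    ∃ c₀ : ℝ, ∀ᵐ t ∂(volume.restrict (Icc 0 T)),
      γ / (2 * η) * (∫ s in (0:ℝ)..T, ξhat s * Real.exp (-ρ * |t - s|)) + ξhat t = c₀ := by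
  -- a strongly measurable representative of ξhat
  set f : ℝ → ℝ := hmem.aestronglyMeasurable.mk ξhat with hfdef
  have hfe : ξhat =ᵐ[volume.restrict (Icc 0 T)] f := hmem.aestronglyMeasurable.ae_eq_mk
  have hf2 : MemLp f 2 (volume.restrict (Icc 0 T)) := hmem.ae_eq hfe
  have hfeIoc : ξhat =ᵐ[volume.restrict (Ioc 0 T)] f :=
    ae_restrict_of_ae_restrict_of_subset Ioc_subset_Icc_self hfe
  have hIoc_vol : ∀ᵐ s ∂(volume : Measure ℝ), s ∈ Ioc (0:ℝ) T → ξhat s = f s :=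
    (ae_restrict_iff' measurableSet_Ioc).1 hfeIoc
  have hfIcc : IntegrableOn f (Icc 0 T) volume := hf2.integrable one_le_two
  have hfI : IntegrableOn f (Ioc 0 T) volume := hfIcc.mono_set Ioc_subset_Icc_self
  have hfT : IntervalIntegrable f volume 0 T :=
    (intervalIntegrable_iff_integrableOn_Ioc_of_le hT.le).2 hfI
  -- interval-integral congruences between ξhat and f
  have hint_f : (∫ t in (0:ℝ)..T, ξhat t) = ∫ t in (0:ℝ)..T, f t :=
    intervalIntegral.integral_congr_ae (by
      rw [uIoc_of_le hT.le]
      filter_upwards [hIoc_vol] with s hs hst using hs hst)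
  have hwA_cong : ∀ t ∈ Icc (0:ℝ) T, wA ρ ξhat t = wA ρ f t := by
    intro t ht
    refine intervalIntegral.integral_congr_ae ?_
    rw [uIoc_of_le ht.1]
    filter_upwards [hIoc_vol] with s hs hst
    rw [hs (Ioc_subset_Ioc_right ht.2 hst)]
  have hK_cong : ∀ t : ℝ, (∫ s in (0:ℝ)..T, ξhat s * Real.exp (-ρ * |t - s|))
      = ∫ s in (0:ℝ)..T, f s * Real.exp (-ρ * |t - s|) := by
    intro t
    refine intervalIntegral.integral_congr_ae ?_
    rw [uIoc_of_le hT.le]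
    filter_upwards [hIoc_vol] with s hs hst
    rw [hs hst]
  have hCf : C ξhat = ∫ t in (0:ℝ)..T, (η * f t ^ 2 + γ * f t * wA ρ f t) := by
    rw [hC]
    refine intervalIntegral.integral_congr_ae ?_
    rw [uIoc_of_le hT.le]
    filter_upwards [hIoc_vol] with t h ht
    rw [h ht, show (∫ s in (0:ℝ)..t, ξhat s * Real.exp (-ρ * (t - s))) = wA ρ ξhat t from rfl,
      hwA_cong t (Ioc_subset_Icc_self ht)]
  -- the continuous version of the Wiener-Hopf convolution of f
  have hwP := wP_continuous T ρ f hfI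
  have hwQ := wQ_continuous T ρ f hfI
  set G : ℝ → ℝ := fun t => γ * (wP T ρ f t + wQ T ρ f t) with hGdef
  have hGcont : Continuous G := by
    exact continuous_const.mul (hwP.add hwQ)
  have hG2 : MemLp G 2 (volume.restrict (Icc 0 T)) := by
    obtain ⟨Cb, hCb⟩ := (isCompact_Icc (a := (0:ℝ)) (b := T)).exists_bound_of_continuousOn
      hGcont.continuousOn
    exact MemLp.of_bound hGcont.aestronglyMeasurable Cb
      ((ae_restrict_iff' measurableSet_Icc).2 (Filter.Eventually.of_forall hCb))
  set g : ℝ → ℝ := fun t => 2 * η * f t + G t with hgdef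
  have hg2 : MemLp g 2 (volume.restrict (Icc 0 T)) := (hf2.const_mul (2 * η)).add hG2
  have hgIcc : IntegrableOn g (Icc 0 T) volume := hg2.integrable one_le_two
  have hgI : IntegrableOn g (Ioc 0 T) volume := hgIcc.mono_set Ioc_subset_Icc_self
  have hgT : IntervalIntegrable g volume 0 T :=
    (intervalIntegrable_iff_integrableOn_Ioc_of_le hT.le).2 hgI
  set gbar : ℝ := (∫ t in (0:ℝ)..T, g t) / T with hgbar
  set ζ : ℝ → ℝ := fun t => g t - gbar with hzdef
  have hz2 : MemLp ζ 2 (volume.restrict (Icc 0 T)) := hg2.sub (memLp_const gbar)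
  have hzIcc : IntegrableOn ζ (Icc 0 T) volume := hz2.integrable one_le_two
  have hzI : IntegrableOn ζ (Ioc 0 T) volume := hzIcc.mono_set Ioc_subset_Icc_self
  have hzT : IntervalIntegrable ζ volume 0 T :=
    (intervalIntegrable_iff_integrableOn_Ioc_of_le hT.le).2 hzI
  have hζ0 : (∫ t in (0:ℝ)..T, ζ t) = 0 := by
    rw [hzdef]
    rw [intervalIntegral.integral_sub hgT intervalIntegrable_const,
      intervalIntegral.integral_const, hgbar, smul_eq_mul, sub_zero]
    field_simp
    ring
  -- minimality in the perturbed direction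
  have hmin' : ∀ ε : ℝ,
      (∫ t in (0:ℝ)..T, (η * f t ^ 2 + γ * f t * wA ρ f t)) ≤
      ∫ t in (0:ℝ)..T, (η * (f t + ε * ζ t) ^ 2 +
        γ * (f t + ε * ζ t) * wA ρ (fun s => f s + ε * ζ s) t) := by
    intro ε
    have hξ2 : MemLp (fun t => f t + ε * ζ t) 2 (volume.restrict (Icc 0 T)) :=
      hf2.add (hz2.const_mul ε)
    have hξint : (∫ t in (0:ℝ)..T, (f t + ε * ζ t)) = x := by
      rw [intervalIntegral.integral_add hfT (hzT.const_mul ε),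
        intervalIntegral.integral_const_mul, hζ0, ← hint_f, hadm]
      ring
    have h := hmin (fun t => f t + ε * ζ t) hξ2 hξint
    rw [hCf, hC] at h
    exact h
  have hkey := wh_first_order T η γ ρ hT hη hγ hρ f ζ hf2 hz2 hmin'
  -- rewrite the key identity as the vanishing of ∫ ζ²
  have hsq : (∫ t in Ioc (0:ℝ) T, ζ t *
      (2 * η * f t + γ * ∫ s in (0:ℝ)..T, f s * Real.exp (-ρ * |t - s|)))
      = ∫ t in Ioc (0:ℝ) T, (ζ t ^ 2 + gbar * ζ t) := by
    refine setIntegral_congr_fun measurableSet_Ioc fun t ht => ?_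
    rw [wK_eq T ρ f hρ.le hfI (Ioc_subset_Icc_self ht)]
    show ζ t * (2 * η * f t + γ * (wP T ρ f t + wQ T ρ f t)) = ζ t ^ 2 + gbar * ζ t
    have : ζ t = 2 * η * f t + γ * (wP T ρ f t + wQ T ρ f t) - gbar := rfl
    rw [this]; ring
  have hζsqIcc : IntegrableOn (fun t => ζ t ^ 2) (Icc 0 T) volume := hz2.integrable_sq
  have hζsqI : IntegrableOn (fun t => ζ t ^ 2) (Ioc 0 T) volume :=
    hζsqIcc.mono_set Ioc_subset_Icc_self
  have hζIoc : (∫ t in Ioc (0:ℝ) T, ζ t) = 0 := by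
    rw [← intervalIntegral.integral_of_le hT.le]; exact hζ0
  have hsq0 : (∫ t in Ioc (0:ℝ) T, ζ t ^ 2) = 0 := by
    have h1 : (∫ t in Ioc (0:ℝ) T, (ζ t ^ 2 + gbar * ζ t))
        = (∫ t in Ioc (0:ℝ) T, ζ t ^ 2) + gbar * ∫ t in Ioc (0:ℝ) T, ζ t := by
      rw [integral_add hζsqI (hzI.const_mul gbar), integral_const_mul]
    rw [hsq, h1, hζIoc] at hkey
    linarith
  have hzero : ζ =ᵐ[volume.restrict (Ioc (0:ℝ) T)] 0 := by
    have h := (integral_eq_zero_iff_of_nonneg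
      (fun t => sq_nonneg (ζ t)) hζsqI).1 hsq0
    filter_upwards [h] with t ht
    have : ζ t ^ 2 = 0 := ht
    exact pow_eq_zero_iff (n := 2) (by norm_num) |>.1 this
  have hzeroIcc : ζ =ᵐ[volume.restrict (Icc (0:ℝ) T)] 0 := by
    rwa [← Measure.restrict_congr_set Ioc_ae_eq_Icc]
  -- conclude
  refine ⟨gbar / (2 * η), ?_⟩
  filter_upwards [hfe, hzeroIcc, ae_restrict_mem measurableSet_Icc] with t htf htz htmem
  have hζt : g t = gbar := by
    have : ζ t = 0 := htz
    have h2 : g t - gbar = 0 := this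
    linarith
  have hgt : 2 * η * f t + γ * (wP T ρ f t + wQ T ρ f t) = gbar := hζt
  rw [hK_cong t, htf, wK_eq T ρ f hρ.le hfI htmem]
  field_simp
  linarith
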